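/- Let α, β, γ, μ, ν be an admissible solution of System B on an interval. Then the function t ↦ ν(t)·√(α(t)) is constant on that interval, and the function t ↦ μ(t)·√(α(t)) has derivative 8·√(α(t)) at every point of the interval. -/

import Mathlib

/-- **System B**: the homogeneous Ricci flow equations on `SL(2,ℂ)/U(1)` for
real-valued differentiable functions `α β γ μ ν` on a set `s`, with `τ := μ² + ν²`,
together with the admissibility conditions `α > 0`, `β > 0`, `γ > 0`, `βγ > τ`. -/
def IsAdmissibleSolutionB (α β γ μ ν : ℝ → ℝ) (s : Set ℝ) : Prop :=
  ∀ t ∈ s,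
    0 < α t ∧ 0 < β t ∧ 0 < γ t ∧
    μ t ^ 2 + ν t ^ 2 < β t * γ t ∧
    HasDerivWithinAt α
      (2 * (16 * β t * γ t - α t ^ 2) / (β t * γ t - (μ t ^ 2 + ν t ^ 2))) s t ∧
    HasDerivWithinAt β
      (-(β t * (16 * (μ t ^ 2 + ν t ^ 2) - α t ^ 2)) /
        (α t * (β t * γ t - (μ t ^ 2 + ν t ^ 2)))) s t ∧
    HasDerivWithinAt γ
      (-(γ t * (16 * (μ t ^ 2 + ν t ^ 2) - α t ^ 2)) /
        (α t * (β t * γ t - (μ t ^ 2 + ν t ^ 2)))) s t ∧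
    HasDerivWithinAt μ
      (8 - μ t * (16 * β t * γ t - α t ^ 2) /
        (α t * (β t * γ t - (μ t ^ 2 + ν t ^ 2)))) s t ∧
    HasDerivWithinAt ν
      (-(ν t * (16 * β t * γ t - α t ^ 2)) /
        (α t * (β t * γ t - (μ t ^ 2 + ν t ^ 2)))) s t

/-- For an admissible solution of System B on an interval, the function `ν·√α` is
constant on that interval and the function `μ·√α` has derivative `8·√α` at every
point of the interval. -/
theorem systemB_first_integrals (s : Set ℝ) (hs : s.OrdConnected)
    (α β γ μ ν : ℝ → ℝ)
    (h : IsAdmissibleSolutionB α β γ μ ν s) :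
    (∀ t₁ ∈ s, ∀ t₂ ∈ s, ν t₁ * Real.sqrt (α t₁) = ν t₂ * Real.sqrt (α t₂)) ∧
      ∀ t ∈ s, HasDerivWithinAt (fun u => μ u * Real.sqrt (α u))
        (8 * Real.sqrt (α t)) s t := by
  have key : ∀ t ∈ s,
      HasDerivWithinAt (fun u => ν u * Real.sqrt (α u)) 0 s t ∧
      HasDerivWithinAt (fun u => μ u * Real.sqrt (α u)) (8 * Real.sqrt (α t)) s t := by
    intro t ht
    obtain ⟨hα, hβ, hγ, hτ, hα', hβ', hγ', hμ', hν'⟩ := h t ht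
    have hD : 0 < β t * γ t - (μ t ^ 2 + ν t ^ 2) := by linarith
    have hsa : 0 < Real.sqrt (α t) := Real.sqrt_pos.mpr hα
    have hmul : Real.sqrt (α t) * Real.sqrt (α t) = α t := Real.mul_self_sqrt hα.le
    have hsqrt : HasDerivWithinAt (fun u => Real.sqrt (α u))
        (1 / (2 * Real.sqrt (α t)) *
          (2 * (16 * β t * γ t - α t ^ 2) / (β t * γ t - (μ t ^ 2 + ν t ^ 2)))) s t :=
      (Real.hasDerivAt_sqrt hα.ne').comp_hasDerivWithinAt t hα'
    constructor
    · have := hν'.mul hsqrt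
      refine HasDerivWithinAt.congr_deriv this ?_
      have h2 : Real.sqrt (α t) ^ 2 = α t := Real.sq_sqrt hα.le
      field_simp
      ring_nf
      simp only [h2]
      ring
    · have := hμ'.mul hsqrt
      refine HasDerivWithinAt.congr_deriv this ?_
      have h2 : Real.sqrt (α t) ^ 2 = α t := Real.sq_sqrt hα.le
      field_simp
      ring_nf
      simp only [h2]
      ring
  constructor
  · intro t₁ ht₁ t₂ ht₂
    have hc : Convex ℝ s := hs.convex
    have := hc.norm_image_sub_le_of_norm_hasDerivWithin_le (C := 0)
      (f := fun u => ν u * Real.sqrt (α u)) (f' := fun _ => 0)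
      (fun x hx => (key x hx).1) (fun x _ => by simp) ht₁ ht₂
    have h0 : ‖ν t₂ * Real.sqrt (α t₂) - ν t₁ * Real.sqrt (α t₁)‖ ≤ 0 := by
      simpa using this
    have := norm_nonneg (ν t₂ * Real.sqrt (α t₂) - ν t₁ * Real.sqrt (α t₁))
    have : ν t₂ * Real.sqrt (α t₂) - ν t₁ * Real.sqrt (α t₁) = 0 := by
      have := le_antisymm h0 (norm_nonneg _)
      simpa [norm_eq_zero, sub_eq_zero] using this
    linarith
  · exact fun t ht => (key t ht).2
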